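/- arXiv:2605.06656 — 3 statements merged into one kernel-verified Lean document; each statement's English description precedes it below -/
import Mathlib

section
/- In partial set cover, if an optimal solution of k sets covers at least m elements, then after t greedy iterations the number of still-required elements (m minus elements covered so far, floored at 0) is at most m·(1 − 1/k)^t. -/
open Classical Finset

/-- In partial set cover, if an optimal solution of k sets covers at least m elements,
then after t greedy iterations the number of still-required elements (floored at 0)
is at most m·(1 − 1/k)^t. -/
theorem greedy_partial_cover_decay {α : Type*} (F : Finset (Finset α)) (k m : ℕ)
    (hk : 0 < k)
    (C : Finset (Finset α)) (hCF : C ⊆ F) (hCk : C.card = k)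
    (hcov : m ≤ (C.biUnion id).card)
    (G : ℕ → Finset α)
    (hGmem : ∀ t, G t ∈ F)
    (hGreedy : ∀ t, ∀ S ∈ F,
      (S \ (Finset.range t).biUnion G).card ≤
        (G t \ (Finset.range t).biUnion G).card)
    (t : ℕ) :
    max ((m : ℝ) - ((Finset.range t).biUnion G).card) 0 ≤
      (m : ℝ) * (1 - 1 / k) ^ t := by
  have hk1 : (1:ℝ) ≤ (k:ℝ) := by exact_mod_cast hk
  have hkpos : (0:ℝ) < (k:ℝ) := by linarith
  have hfac0 : (0:ℝ) ≤ 1 - 1/(k:ℝ) := by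
    have : (1:ℝ)/k ≤ 1 := by rw [div_le_one hkpos]; exact hk1
    linarith
  induction t with
  | zero => simp
  | succ t ih =>
    set U := (Finset.range t).biUnion G with hU
    have hUsucc : (Finset.range (t+1)).biUnion G = U ∪ G t := by
      rw [Finset.range_add_one, Finset.biUnion_insert, Finset.union_comm]
    -- key inequality: m - |U| ≤ k * |G t \ U|
    have hkeyN : m ≤ k * (G t \ U).card + U.card := by
      have h1 : (C.biUnion id).card ≤ ((C.biUnion id) \ U).card + U.card :=
        Finset.card_le_card_sdiff_add_card
      have h2 : (C.biUnion id) \ U = C.biUnion (fun S => S \ U) := by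
        ext x; simp [Finset.mem_biUnion, Finset.mem_sdiff]; tauto
      have h3 : (C.biUnion (fun S => S \ U)).card ≤ ∑ S ∈ C, (S \ U).card :=
        Finset.card_biUnion_le
      have h4 : ∑ S ∈ C, (S \ U).card ≤ ∑ S ∈ C, (G t \ U).card :=
        Finset.sum_le_sum (fun S hS => hGreedy t S (hCF hS))
      have h5 : ∑ S ∈ C, (G t \ U).card = k * (G t \ U).card := by
        rw [Finset.sum_const, hCk, smul_eq_mul]
      calc m ≤ (C.biUnion id).card := hcov
        _ ≤ ((C.biUnion id) \ U).card + U.card := h1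
        _ ≤ k * (G t \ U).card + U.card := by
            rw [h2]
            exact Nat.add_le_add_right (h3.trans (h4.trans_eq h5)) _
    have hkey : (m:ℝ) - (U.card:ℝ) ≤ (k:ℝ) * ((G t \ U).card : ℝ) := by
      have h : (m:ℝ) ≤ (k:ℝ) * ((G t \ U).card : ℝ) + (U.card : ℝ) := by
        exact_mod_cast hkeyN
      linarith
    have hcard : (((Finset.range (t+1)).biUnion G).card : ℝ)
        = (U.card : ℝ) + ((G t \ U).card : ℝ) := by
      rw [hUsucc]
      have h1 : U ∪ G t = U ∪ (G t \ U) := (Finset.union_sdiff_self_eq_union).symm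
      rw [h1, Finset.card_union_of_disjoint Finset.disjoint_sdiff]
      push_cast; ring
    set g : ℝ := ((G t \ U).card : ℝ) with hg
    set u : ℝ := (U.card : ℝ) with hu
    have hg0 : 0 ≤ g := by positivity
    have hstep : max ((m:ℝ) - (u + g)) 0 ≤ (1 - 1/(k:ℝ)) * max ((m:ℝ) - u) 0 := by
      rcases le_or_gt ((m:ℝ) - u) 0 with h | h
      · have h1 : (m:ℝ) - (u + g) ≤ 0 := by linarith
        rw [max_eq_right h1]
        exact mul_nonneg hfac0 (le_max_right _ _)
      · rw [max_eq_left h.le]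
        apply max_le
        · have hkk : (1/(k:ℝ)) * (k:ℝ) = 1 := one_div_mul_cancel (ne_of_gt hkpos)
          nlinarith [hkey]
        · exact mul_nonneg hfac0 h.le
    calc max ((m:ℝ) - (((Finset.range (t+1)).biUnion G).card : ℝ)) 0
        = max ((m:ℝ) - (u + g)) 0 := by rw [hcard]
      _ ≤ (1 - 1/(k:ℝ)) * max ((m:ℝ) - u) 0 := hstep
      _ ≤ (1 - 1/(k:ℝ)) * ((m:ℝ) * (1 - 1/(k:ℝ))^t) := by
          exact mul_le_mul_of_nonneg_left ih hfac0
      _ = (m:ℝ) * (1 - 1/(k:ℝ))^(t+1) := by ring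
end

section
/- The greedy algorithm for partial set cover with target m, when an optimal cover of size k exists, terminates with a subfamily of size at most k·(1 + ln m) (equivalently, it achieves an O(ln m) approximation). -/
open Classical Finset

/-- The greedy algorithm for partial set cover with target m, when an optimal cover
of size k exists, terminates with a subfamily of size at most k·(1 + ln m). -/
theorem greedy_partial_cover_size {α : Type*} (F : Finset (Finset α)) (k m : ℕ)
    (hk : 0 < k) (hm : 0 < m)
    (C : Finset (Finset α)) (hCF : C ⊆ F) (hCk : C.card = k)
    (hcov : m ≤ (C.biUnion id).card)
    (G : ℕ → Finset α)
    (hGmem : ∀ t, G t ∈ F)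
    (hGreedy : ∀ t, ∀ S ∈ F,
      (S \ (Finset.range t).biUnion G).card ≤
        (G t \ (Finset.range t).biUnion G).card)
    (T : ℕ)
    (hT : m ≤ ((Finset.range T).biUnion G).card)
    (hTmin : ∀ s < T, ((Finset.range s).biUnion G).card < m) :
    (T : ℝ) ≤ k * (1 + Real.log m) := by
  have hlogm : 0 ≤ Real.log m := Real.log_natCast_nonneg m
  have hk1 : (1:ℝ) ≤ k := by exact_mod_cast hk
  set c : ℕ → ℕ := fun t => ((Finset.range t).biUnion G).card with hc
  set g : ℕ → ℕ := fun t => (G t \ (Finset.range t).biUnion G).card with hg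
  have hstep : ∀ t, c (t + 1) = c t + g t := by
    intro t
    simp only [hc, hg]
    rw [Finset.range_add_one, Finset.biUnion_insert, ← Finset.card_sdiff_add_card]
    ring
  -- key counting lemma
  have hA : ∀ t, m ≤ k * g t + c t := by
    intro t
    set A := (Finset.range t).biUnion G with hAdef
    have h1 : (C.biUnion id).card ≤ ((C.biUnion id) \ A).card + A.card :=
      Finset.card_le_card_sdiff_add_card
    have h2 : (C.biUnion id) \ A ⊆ C.biUnion (fun S => S \ A) := by
      intro x hx
      rw [Finset.mem_sdiff, Finset.mem_biUnion] at hx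
      rcases hx with ⟨⟨S, hS, hxS⟩, hxA⟩
      exact Finset.mem_biUnion.2 ⟨S, hS, Finset.mem_sdiff.2 ⟨hxS, hxA⟩⟩
    have h3 : ((C.biUnion id) \ A).card ≤ ∑ S ∈ C, (S \ A).card :=
      le_trans (Finset.card_le_card h2) (Finset.card_biUnion_le)
    have h4 : ∑ S ∈ C, (S \ A).card ≤ ∑ _S ∈ C, g t := by
      apply Finset.sum_le_sum
      intro S hS
      exact hGreedy t S (hCF hS)
    have h6 : c t = A.card := rfl
    have h5 : ∑ _S ∈ C, g t = k * g t := by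
      rw [Finset.sum_const, hCk, smul_eq_mul]
    omega
  set ρ : ℝ := ((k : ℝ) - 1) / k with hρ
  have hkpos : (0:ℝ) < k := by positivity
  have hρ0 : 0 ≤ ρ := by
    apply div_nonneg _ (le_of_lt hkpos); linarith
  -- decay bound
  have hdecay : ∀ t, t < T → ((m : ℝ) - c t) ≤ m * ρ ^ t := by
    intro t
    induction t with
    | zero =>
      intro _
      simp [hc]
    | succ t ih =>
      intro ht
      have ht' : t < T := Nat.lt_of_succ_lt ht
      have ih' := ih ht'
      have hct : c t < m := hTmin t ht'
      have h1 : (1:ℝ) ≤ (m : ℝ) - c t := by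
        have : (c t : ℝ) + 1 ≤ m := by exact_mod_cast hct
        linarith
      have hAreal : (m : ℝ) ≤ k * g t + c t := by exact_mod_cast hA t
      have hgt : ((m : ℝ) - c t) / k ≤ g t := by
        rw [div_le_iff₀ hkpos]
        nlinarith
      have hcs : (c (t + 1) : ℝ) = c t + g t := by exact_mod_cast hstep t
      have hmul : ((m : ℝ) - c t) * ρ ≤ (m * ρ ^ t) * ρ :=
        mul_le_mul_of_nonneg_right ih' hρ0
      have heq : ((m : ℝ) - c t) * ρ = ((m : ℝ) - c t) - ((m : ℝ) - c t) / k := by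
        field_simp [hρ]
        ring_nf; rw [hρ, div_mul_cancel₀ _ (ne_of_gt hkpos)]; ring
      have : ((m : ℝ) - c (t + 1)) ≤ ((m : ℝ) - c t) * ρ := by
        rw [hcs, heq]; linarith
      calc ((m : ℝ) - c (t + 1)) ≤ ((m : ℝ) - c t) * ρ := this
        _ ≤ (m * ρ ^ t) * ρ := hmul
        _ = m * ρ ^ (t + 1) := by ring
  -- conclude
  rcases Nat.eq_zero_or_pos T with hT0 | hTpos
  · subst hT0
    push_cast
    nlinarith
  · obtain ⟨s, rfl⟩ : ∃ s, T = s + 1 := ⟨T - 1, by omega⟩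
    have hs : s < s + 1 := Nat.lt_succ_self s
    have hcs : c s < m := hTmin s hs
    have h1 : (1:ℝ) ≤ (m : ℝ) - c s := by
      have : (c s : ℝ) + 1 ≤ m := by exact_mod_cast hcs
      linarith
    have hkey : (1:ℝ) ≤ m * ρ ^ s := le_trans h1 (hdecay s hs)
    rcases Nat.lt_or_ge k 2 with hk2 | hk2
    · -- k = 1
      have hk1' : k = 1 := by omega
      have hρz : ρ = 0 := by rw [hρ, hk1']; norm_num
      rcases Nat.eq_zero_or_pos s with hs0 | hspos
      · subst hs0
        push_cast
        nlinarith
      · exfalso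
        rw [hρz, zero_pow (by omega : s ≠ 0)] at hkey
        simp at hkey; linarith
    · -- k ≥ 2
      have hρpos : 0 < ρ := by
        apply div_pos _ hkpos
        have : (2:ℝ) ≤ k := by exact_mod_cast hk2
        linarith
      have hmpos : (0:ℝ) < m := by exact_mod_cast hm
      have hlog : 0 ≤ Real.log (m * ρ ^ s) := Real.log_nonneg hkey
      rw [Real.log_mul (ne_of_gt hmpos) (by positivity), Real.log_pow] at hlog
      have hlogρ : Real.log ρ ≤ ρ - 1 := Real.log_le_sub_one_of_pos hρpos
      have hρ1 : ρ - 1 = -(1/k) := by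
        rw [hρ]; field_simp; ring
      have h2 : (s : ℝ) * Real.log ρ ≤ (s : ℝ) * (-(1/k)) := by
        apply mul_le_mul_of_nonneg_left _ (Nat.cast_nonneg s)
        rw [← hρ1]; exact hlogρ
      have h3 : (s : ℝ) * (1/k) ≤ Real.log m := by linarith
      have : (s : ℝ) ≤ k * Real.log m := by
        rw [mul_one_div, div_le_iff₀ hkpos] at h3
        linarith
      push_cast
      nlinarith
end

section
/- For a budget of k sets, the greedy algorithm for maximum coverage covers at least (1 − (1 − 1/k)^k) ≥ (1 − 1/e) times as many elements as the best collection of k sets. -/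
open Classical Finset

/-- Greedy for maximum coverage with budget k covers at least
(1 − (1 − 1/k)^k) ≥ 1 − 1/e times as many elements as the best k sets. -/
theorem greedy_max_coverage {α : Type*} (F : Finset (Finset α)) (k : ℕ) (hk : 0 < k)
    (G : ℕ → Finset α)
    (hGmem : ∀ t, G t ∈ F)
    (hGreedy : ∀ t, ∀ S ∈ F,
      (S \ (Finset.range t).biUnion G).card ≤
        (G t \ (Finset.range t).biUnion G).card)
    (C : Finset (Finset α)) (hCF : C ⊆ F) (hCk : C.card ≤ k) :
    (1 - (1 - 1 / (k : ℝ)) ^ k) * (C.biUnion id).card ≤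
        (((Finset.range k).biUnion G).card : ℝ) ∧
      1 - 1 / Real.exp 1 ≤ 1 - (1 - 1 / (k : ℝ)) ^ k := by
  have hk' : (0:ℝ) < k := by exact_mod_cast hk
  have hk1 : (1:ℝ) ≤ k := by exact_mod_cast hk
  have hfac : (0:ℝ) ≤ 1 - 1/(k:ℝ) := by
    have : 1/(k:ℝ) ≤ 1 := by
      rw [div_le_one hk']; exact hk1
    linarith
  set OPT : ℝ := ((C.biUnion id).card : ℝ) with hOPT
  set cov : ℕ → ℝ := fun t => (((Finset.range t).biUnion G).card : ℝ) with hcov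
  -- one-step inequality
  have key : ∀ t, OPT - cov (t+1) ≤ (OPT - cov t) * (1 - 1/(k:ℝ)) := by
    intro t
    set X := (Finset.range t).biUnion G with hX
    set g : ℝ := ((G t \ X).card : ℝ) with hg
    have hstep : cov (t+1) = cov t + g := by
      have : (Finset.range (t+1)).biUnion G = G t ∪ X := by
        rw [Finset.range_add_one, Finset.biUnion_insert]
      simp only [hcov, this]
      rw [← Finset.card_sdiff_add_card]
      push_cast; ring
    -- uncovered part of OPT
    have hsub : C.biUnion id ⊆ (C.biUnion fun S => S \ X) ∪ X := by
      intro x hx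
      simp only [Finset.mem_biUnion, Finset.mem_union, id] at *
      rcases hx with ⟨S, hS, hxS⟩
      by_cases hxX : x ∈ X
      · exact Or.inr hxX
      · exact Or.inl ⟨S, hS, Finset.mem_sdiff.2 ⟨hxS, hxX⟩⟩
    have h1 : OPT ≤ ((C.biUnion fun S => S \ X).card : ℝ) + cov t := by
      have := Finset.card_le_card hsub
      have h2 := Finset.card_union_le (C.biUnion fun S => S \ X) X
      have : (C.biUnion id).card ≤ (C.biUnion fun S => S \ X).card + X.card :=
        le_trans (Finset.card_le_card hsub) h2
      simp only [hOPT, hcov]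
      exact_mod_cast this
    have h3 : ((C.biUnion fun S => S \ X).card : ℝ) ≤ (k:ℝ) * g := by
      have hb := Finset.card_biUnion_le (s := C) (t := fun S => S \ X)
      have hsum : ∑ S ∈ C, (S \ X).card ≤ ∑ _S ∈ C, (G t \ X).card := by
        apply Finset.sum_le_sum
        intro S hS
        exact hGreedy t S (hCF hS)
      have hsum2 : ∑ _S ∈ C, (G t \ X).card = C.card * (G t \ X).card := by
        simp [Finset.sum_const, mul_comm]
      have : (C.biUnion fun S => S \ X).card ≤ k * (G t \ X).card := by
        calc (C.biUnion fun S => S \ X).card ≤ ∑ S ∈ C, (S \ X).card := hb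
          _ ≤ C.card * (G t \ X).card := by rw [← hsum2]; exact hsum
          _ ≤ k * (G t \ X).card := Nat.mul_le_mul_right _ hCk
      simp only [hg]
      exact_mod_cast this
    have hkg : OPT - cov t ≤ (k:ℝ) * g := by linarith
    rw [hstep]
    have : (OPT - cov t) * (1 - 1/(k:ℝ)) = (OPT - cov t) - (OPT - cov t) / k := by
      field_simp
    rw [this]
    have : (OPT - cov t) / k ≤ g := by
      rw [div_le_iff₀ hk']
      nlinarith
    linarith
  -- induction
  have main : ∀ t, OPT - cov t ≤ (1 - 1/(k:ℝ))^t * OPT := by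
    intro t
    induction t with
    | zero => simp [hcov, hOPT]
    | succ n ih =>
      calc OPT - cov (n+1) ≤ (OPT - cov n) * (1 - 1/(k:ℝ)) := key n
        _ ≤ ((1 - 1/(k:ℝ))^n * OPT) * (1 - 1/(k:ℝ)) :=
            mul_le_mul_of_nonneg_right ih hfac
        _ = (1 - 1/(k:ℝ))^(n+1) * OPT := by ring
  constructor
  · have := main k
    have hco : cov k = (((Finset.range k).biUnion G).card : ℝ) := rfl
    nlinarith [this]
  · have h1 : (1 - 1/(k:ℝ))^k ≤ 1 / Real.exp 1 := by
      have he : 1 - 1/(k:ℝ) ≤ Real.exp (-(1/(k:ℝ))) := by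
        have := Real.add_one_le_exp (-(1/(k:ℝ)))
        linarith
      have hp : (1 - 1/(k:ℝ))^k ≤ (Real.exp (-(1/(k:ℝ))))^k :=
        pow_le_pow_left₀ hfac he k
      have : (Real.exp (-(1/(k:ℝ))))^k = Real.exp ((k:ℝ) * (-(1/(k:ℝ)))) :=
        (Real.exp_nat_mul _ k).symm
      rw [this] at hp
      have hkk : (k:ℝ) * (-(1/(k:ℝ))) = -1 := by field_simp
      rw [hkk] at hp
      rw [Real.exp_neg] at hp
      simpa [one_div] using hp
    linarith
end
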